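/- Every pyramidal tour (without step-backs) x̂ on {1,...,n} corresponds to a vertex of PSB(n) adjacent in the 1-skeleton to the vertex of the pyramidal tour that visits all cities 2,...,n−1 in ascending order (the tour ⟨1,2,...,n⟩ with return edge (n,1)), and also adjacent to the vertex of the tour visiting all of 2,...,n−1 in descending order. -/

import Mathlib

/-- A Hamiltonian tour on the cities `{1,…,n}` (represented as `Fin n`,
city `c` corresponding to the element `c-1`): a permutation acting cyclically on all cities. -/
def IsTour {n : ℕ} (τ : Equiv.Perm (Fin n)) : Prop :=
  ∀ i j : Fin n, ∃ k : ℕ, (τ ^ k) i = j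

/-- `i` is a peak of the tour `τ`. -/
def IsPeak {n : ℕ} (τ : Equiv.Perm (Fin n)) (i : Fin n) : Prop :=
  τ⁻¹ i < i ∧ τ i < i

/-- `i` is a step-back peak of `τ`: either `τ⁻¹ i < i`, `τ i = i - 1`, `τ² i > i`
(ascending step-back) or `τ⁻² i > i`, `τ⁻¹ i = i - 1`, `τ i < i` (descending step-back). -/
def IsStepBackPeak {n : ℕ} (τ : Equiv.Perm (Fin n)) (i : Fin n) : Prop :=
  (τ⁻¹ i < i ∧ ((τ i : ℕ) + 1 = (i : ℕ)) ∧ i < τ (τ i)) ∨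
  (i < τ⁻¹ (τ⁻¹ i) ∧ ((τ⁻¹ i : ℕ) + 1 = (i : ℕ)) ∧ τ i < i)

/-- A pyramidal tour: a Hamiltonian tour whose unique peak is the last city `n`. -/
def IsPyramidal {n : ℕ} (τ : Equiv.Perm (Fin n)) : Prop :=
  IsTour τ ∧ ∀ i : Fin n, IsPeak τ i ↔ (i : ℕ) = n - 1

/-- A pyramidal tour with step-backs: a Hamiltonian tour with exactly one proper peak
(a peak that is not a step-back peak), namely the last city `n`. -/
def IsPSB {n : ℕ} (τ : Equiv.Perm (Fin n)) : Prop :=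
  IsTour τ ∧ ∀ i : Fin n, (IsPeak τ i ∧ ¬ IsStepBackPeak τ i) ↔ (i : ℕ) = n - 1

/-- City `i` is visited by `τ` in ascending order (taking step-backs into account):
either the successor of `i` is larger and `i` is not the lower city of a descending
step-back, or `i` is an ascending step-back peak. -/
def Ascends {n : ℕ} (τ : Equiv.Perm (Fin n)) (i : Fin n) : Prop :=
  (i < τ i ∧ ¬ (((i : ℕ) + 1 = (τ i : ℕ)) ∧ τ (τ i) < τ i ∧ τ i < τ⁻¹ i)) ∨
  (τ⁻¹ i < i ∧ ((τ i : ℕ) + 1 = (i : ℕ)) ∧ i < τ (τ i))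

/-- The city represented by the element of `Fin n` with value `m` is visited ascending. -/
def AscAt {n : ℕ} (τ : Equiv.Perm (Fin n)) (m : ℕ) : Prop :=
  ∃ i : Fin n, (i : ℕ) = m ∧ Ascends τ i

/-- The city represented by the element of `Fin n` with value `m` is a step-back peak. -/
def SBPeakAt {n : ℕ} (τ : Equiv.Perm (Fin n)) (m : ℕ) : Prop :=
  ∃ i : Fin n, (i : ℕ) = m ∧ IsStepBackPeak τ i

/-- The pyramidal encodings of `x` and `y` have the same value at coordinate `m`. -/
def SameEnc {n : ℕ} (x y : Equiv.Perm (Fin n)) (m : ℕ) : Prop :=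
  (AscAt x m ↔ AscAt y m) ∧ (SBPeakAt x m ↔ SBPeakAt y m)

/-- The pyramidal encodings of `x` and `y` agree on the pair of neighboring
coordinates `(k, k+1)`, including the step-back marks overlapping the pair. -/
def SamePair {n : ℕ} (x y : Equiv.Perm (Fin n)) (k : ℕ) : Prop :=
  SameEnc x y k ∧ SameEnc x y (k + 1) ∧ (SBPeakAt x (k + 2) ↔ SBPeakAt y (k + 2))

/-- Characteristic vector of a tour, in `ℝ^E` with `E = Fin n × Fin n`. -/
def chv {n : ℕ} (τ : Equiv.Perm (Fin n)) : Fin n × Fin n → ℝ :=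
  fun e => if τ e.1 = e.2 then 1 else 0

/-- The vertices of the polytope `PSB(n)`: characteristic vectors of all
pyramidal tours with step-backs. -/
def PSBvertices (n : ℕ) : Set (Fin n × Fin n → ℝ) :=
  chv '' {τ : Equiv.Perm (Fin n) | IsPSB τ}

/-- `u` and `w` are adjacent vertices in the 1-skeleton of the polytope `conv S`:
the segment `[u,w]` is a one-dimensional face (an extreme subset) of the polytope. -/
def AdjacentIn {n : ℕ} (S : Set (Fin n × Fin n → ℝ)) (u w : Fin n × Fin n → ℝ) : Prop :=
  u ≠ w ∧ IsExtreme ℝ (convexHull ℝ S) (segment ℝ u w)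

section Aux
open Finset
variable {n : ℕ}

lemma pow_mem_invariant (σ : Equiv.Perm (Fin n)) (B : Set (Fin n))
    (hB : ∀ i ∈ B, σ i ∈ B) {i : Fin n} (hi : i ∈ B) : ∀ k : ℕ, (σ ^ k) i ∈ B := by
  intro k
  induction k with
  | zero => simpa using hi
  | succ k ih =>
      have h : (σ ^ (k + 1)) i = σ ((σ ^ k) i) := by
        rw [pow_succ', Equiv.Perm.mul_apply]
      rw [h]
      exact hB _ ih

lemma not_tour_invariant (σ : Equiv.Perm (Fin n)) (B : Set (Fin n))
    (hB : ∀ i ∈ B, σ i ∈ B) {i j : Fin n} (hi : i ∈ B) (hj : j ∉ B) :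
    ¬ IsTour σ := by
  intro hσ
  obtain ⟨k, hk⟩ := hσ i j
  exact hj (hk ▸ pow_mem_invariant σ B hB hi k)


lemma tour_ne_self (hn : 2 ≤ n) (σ : Equiv.Perm (Fin n)) (hσ : IsTour σ) (i : Fin n) :
    σ i ≠ i := by
  intro h
  have hfix : ∀ k : ℕ, (σ ^ k) i = i := fun k =>
    pow_mem_invariant σ {j | j = i} (by intro j hj; simp_all) rfl k
  have h0 : (⟨0, by omega⟩ : Fin n) ≠ (⟨1, by omega⟩ : Fin n) := by
    intro h; exact absurd (congrArg Fin.val h) (by simp)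
  by_cases hi : i = ⟨0, by omega⟩
  · obtain ⟨k, hk⟩ := hσ i ⟨1, by omega⟩
    rw [hfix k] at hk
    exact h0 ((hi ▸ hk).symm).symm
  · obtain ⟨k, hk⟩ := hσ i ⟨0, by omega⟩
    rw [hfix k] at hk
    exact hi hk

lemma exists_down (σ : Equiv.Perm (Fin n)) (hσ : IsTour σ) (c : ℕ) (hc : c < n - 1) :
    ∃ j : Fin n, (σ j : ℕ) ≤ c ∧ c < (j : ℕ) := by
  by_contra hcon
  push_neg at hcon
  have hn : 1 ≤ n := by omega
  refine not_tour_invariant σ {i | c < (i : ℕ)} ?_ (i := ⟨n-1, by omega⟩)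
    (by simp only [Set.mem_setOf_eq]; omega) (j := ⟨0, by omega⟩) (by simp) hσ
  intro i hi
  simp only [Set.mem_setOf_eq] at hi ⊢
  by_contra hle
  push_neg at hle
  exact absurd (hcon i hle) (by omega)

lemma exists_up (σ : Equiv.Perm (Fin n)) (hσ : IsTour σ) (c : ℕ) (hc : c < n - 1) :
    ∃ j : Fin n, (j : ℕ) ≤ c ∧ c < (σ j : ℕ) := by
  by_contra hcon
  push_neg at hcon
  have hn : 1 ≤ n := by omega
  refine not_tour_invariant σ {i | (i : ℕ) ≤ c} ?_ (i := ⟨0, by omega⟩)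
    (by simp) (j := ⟨n-1, by omega⟩) (by simp only [Set.mem_setOf_eq]; omega) hσ
  intro i hi
  simp only [Set.mem_setOf_eq] at hi ⊢
  by_contra hle
  push_neg at hle
  exact absurd (hcon i hi) (by omega)

lemma cross_card (σ : Equiv.Perm (Fin n)) (c : ℕ) :
    (univ.filter fun i : Fin n => (i : ℕ) ≤ c ∧ c < (σ i : ℕ)).card
      = (univ.filter fun i : Fin n => (σ i : ℕ) ≤ c ∧ c < (i : ℕ)).card := by
  classical
  have hbase : (univ.filter fun i : Fin n => (σ i : ℕ) ≤ c).card
      = (univ.filter fun i : Fin n => (i : ℕ) ≤ c).card := by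
    have : (univ.filter fun i : Fin n => (σ i : ℕ) ≤ c)
        = (univ.filter fun j : Fin n => (j : ℕ) ≤ c).map
          ⟨σ.symm, σ.symm.injective⟩ := by
      ext i
      simp only [mem_filter, mem_univ, true_and, Finset.mem_map,
        Function.Embedding.coeFn_mk]
      constructor
      · intro h; exact ⟨σ i, h, σ.symm_apply_apply i⟩
      · rintro ⟨j, hj, rfl⟩; simpa using hj
    rw [this, Finset.card_map]
  have h1 := Finset.card_filter_add_card_filter_not
    (s := univ.filter fun i : Fin n => (i : ℕ) ≤ c)
    (p := fun i => (σ i : ℕ) ≤ c)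
  have h2 := Finset.card_filter_add_card_filter_not
    (s := univ.filter fun i : Fin n => (σ i : ℕ) ≤ c)
    (p := fun i => (i : ℕ) ≤ c)
  rw [Finset.filter_filter] at h1 h2
  rw [Finset.filter_filter] at h1 h2
  have heq : (univ.filter fun i : Fin n => (i : ℕ) ≤ c ∧ (σ i : ℕ) ≤ c)
      = (univ.filter fun i : Fin n => (σ i : ℕ) ≤ c ∧ (i : ℕ) ≤ c) := by
    apply Finset.filter_congr; intro i _; exact and_comm
  have hA : (univ.filter fun i : Fin n => (i : ℕ) ≤ c ∧ ¬ (σ i : ℕ) ≤ c)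
      = (univ.filter fun i : Fin n => (i : ℕ) ≤ c ∧ c < (σ i : ℕ)) := by
    apply Finset.filter_congr; intro i _
    simp [not_le]
  have hB : (univ.filter fun i : Fin n => (σ i : ℕ) ≤ c ∧ ¬ (i : ℕ) ≤ c)
      = (univ.filter fun i : Fin n => (σ i : ℕ) ≤ c ∧ c < (i : ℕ)) := by
    apply Finset.filter_congr; intro i _
    simp [not_le]
  rw [heq, hA] at h1
  rw [hB] at h2
  omega


lemma desc_step {x : Equiv.Perm (Fin n)} (hx : IsPyramidal x) {i : Fin n}
    (h1 : (x i : ℕ) < (i : ℕ)) (h2 : (i : ℕ) ≠ n - 1) : (i : ℕ) < ((x⁻¹) i : ℕ) := by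
  have hnp : ¬ IsPeak x i := fun hp => h2 ((hx.2 i).1 hp)
  have hne : ((x⁻¹) i : ℕ) ≠ (i : ℕ) := by
    intro h
    have h' : (x⁻¹) i = i := Fin.ext h
    have : x i = i := by
      conv_lhs => rw [← h']
      exact x.apply_symm_apply i
    rw [this] at h1
    omega
  have hge : ¬ ((x⁻¹) i < i) := fun hlt => hnp ⟨hlt, by exact Fin.lt_def.mpr h1⟩
  rw [Fin.lt_def, not_lt] at hge
  omega


def topF (n : ℕ) (hn : 1 ≤ n) : Fin n := ⟨n - 1, by omega⟩

lemma chain_lemma {x : Equiv.Perm (Fin n)} (hn : 1 ≤ n) (hx : IsPyramidal x) :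
    ∀ i : Fin n, (x i : ℕ) < (i : ℕ) →
      ∃ s : ℕ, (x ^ s) (topF n hn) = i ∧
        ∀ u, u < s → (x ((x ^ u) (topF n hn)) : ℕ) < ((x ^ u) (topF n hn) : ℕ) := by
  suffices H : ∀ m : ℕ, ∀ i : Fin n, n - 1 - (i : ℕ) ≤ m → (x i : ℕ) < (i : ℕ) →
      ∃ s : ℕ, (x ^ s) (topF n hn) = i ∧
        ∀ u, u < s → (x ((x ^ u) (topF n hn)) : ℕ) < ((x ^ u) (topF n hn) : ℕ) by
    intro i hi; exact H (n - 1 - (i : ℕ)) i le_rfl hi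
  intro m
  induction m with
  | zero =>
      intro i hle hdesc
      have hi : (i : ℕ) = n - 1 := by have := i.isLt; omega
      refine ⟨0, ?_, ?_⟩
      · simp only [pow_zero, Equiv.Perm.coe_one, id_eq]
        exact Fin.ext hi.symm
      · intro u hu; omega
  | succ m ih =>
      intro i hle hdesc
      by_cases hi : (i : ℕ) = n - 1
      · refine ⟨0, ?_, ?_⟩
        · simp only [pow_zero, Equiv.Perm.coe_one, id_eq]
          exact Fin.ext hi.symm
        · intro u hu; omega
      · have hstep := desc_step hx hdesc hi
        set j := (x⁻¹) i with hj
        have hxj : x j = i := x.apply_symm_apply i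
        have hxjlt : (x j : ℕ) < (j : ℕ) := by rw [hxj]; exact hstep
        have hjle : n - 1 - (j : ℕ) ≤ m := by
          have := j.isLt
          omega
        obtain ⟨s, hs, hchain⟩ := ih j hjle hxjlt
        refine ⟨s + 1, ?_, ?_⟩
        · have h3 : (x ^ (s + 1)) (topF n hn) = x ((x ^ s) (topF n hn)) := by
            rw [pow_succ', Equiv.Perm.mul_apply]
          rw [h3, hs, hxj]
        · intro u hu
          rcases Nat.lt_or_ge u s with h | h
          · exact hchain u h
          · have : u = s := by omega
            subst this
            rw [hs]
            exact hxjlt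

lemma down_unique {x : Equiv.Perm (Fin n)} (hx : IsPyramidal x) {c : ℕ} {i j : Fin n}
    (hi1 : (x i : ℕ) ≤ c) (hi2 : c < (i : ℕ)) (hj1 : (x j : ℕ) ≤ c) (hj2 : c < (j : ℕ)) :
    i = j := by
  have hn : 1 ≤ n := by have := i.isLt; omega
  have hdi : (x i : ℕ) < (i : ℕ) := by omega
  have hdj : (x j : ℕ) < (j : ℕ) := by omega
  obtain ⟨s, hsi, hci⟩ := chain_lemma hn hx i hdi
  obtain ⟨t, hsj, hcj⟩ := chain_lemma hn hx j hdj
  have mono : ∀ (r : ℕ), (∀ u, u < r →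
      (x ((x ^ u) (topF n hn)) : ℕ) < ((x ^ u) (topF n hn) : ℕ)) →
      ∀ u v, u ≤ v → v ≤ r → ((x ^ v) (topF n hn) : ℕ) ≤ ((x ^ u) (topF n hn) : ℕ) := by
    intro r hch u v huv hvr
    induction v with
    | zero => have : u = 0 := by omega
              subst this; exact le_rfl
    | succ v ihv =>
        rcases Nat.lt_or_ge u (v+1) with h | h
        · have h1 := ihv (by omega) (by omega)
          have h2 : (x ((x ^ v) (topF n hn)) : ℕ) < ((x ^ v) (topF n hn) : ℕ) :=
            hch v (by omega)
          have h3 : (x ^ (v + 1)) (topF n hn) = x ((x ^ v) (topF n hn)) := by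
            rw [pow_succ', Equiv.Perm.mul_apply]
          rw [h3]
          omega
        · have : u = v + 1 := by omega
          subst this; exact le_rfl
  rcases lt_trichotomy s t with h | h | h
  · exfalso
    have hd : ((x ^ t) (topF n hn) : ℕ) ≤ ((x ^ (s+1)) (topF n hn) : ℕ) :=
      mono t hcj (s+1) t (by omega) le_rfl
    have h3 : (x ^ (s + 1)) (topF n hn) = x ((x ^ s) (topF n hn)) := by
      rw [pow_succ', Equiv.Perm.mul_apply]
    rw [h3, hsi, hsj] at hd
    omega
  · rw [← hsi, ← hsj, h]
  · exfalso
    have hd : ((x ^ s) (topF n hn) : ℕ) ≤ ((x ^ (t+1)) (topF n hn) : ℕ) :=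
      mono s hci (t+1) s (by omega) le_rfl
    have h3 : (x ^ (t + 1)) (topF n hn) = x ((x ^ t) (topF n hn)) := by
      rw [pow_succ', Equiv.Perm.mul_apply]
    rw [h3, hsi, hsj] at hd
    omega


lemma up_unique {x : Equiv.Perm (Fin n)} (hx : IsPyramidal x) {c : ℕ} (hc : c < n - 1)
    {i j : Fin n} (hi1 : (i : ℕ) ≤ c) (hi2 : c < (x i : ℕ))
    (hj1 : (j : ℕ) ≤ c) (hj2 : c < (x j : ℕ)) : i = j := by
  classical
  obtain ⟨d, hd1, hd2⟩ := exists_down x hx.1 c hc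
  have hset : (univ.filter fun k : Fin n => (x k : ℕ) ≤ c ∧ c < (k : ℕ)) = {d} := by
    ext k
    simp only [mem_filter, mem_univ, true_and, mem_singleton]
    constructor
    · rintro ⟨h1, h2⟩; exact down_unique hx h1 h2 hd1 hd2
    · rintro rfl; exact ⟨hd1, hd2⟩
  have hcard := cross_card x c
  rw [hset, Finset.card_singleton] at hcard
  exact Finset.card_le_one.mp (le_of_eq hcard) i
    (by simp only [mem_filter, mem_univ, true_and]; exact ⟨hi1, hi2⟩) j
    (by simp only [mem_filter, mem_univ, true_and]; exact ⟨hj1, hj2⟩)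


lemma keylemma (hn : 2 ≤ n) {x τ a : Equiv.Perm (Fin n)} (hx : IsPyramidal x)
    (hτ : IsTour τ) (ha : ∀ i : Fin n, (a i : ℕ) = ((i : ℕ) + 1) % n)
    (hsel : ∀ i, τ i = x i ∨ τ i = a i) : τ = x ∨ τ = a := by
  classical
  have hn1 : 1 ≤ n := by omega
  set top : Fin n := topF n hn1 with htopdef
  have htopval : (top : ℕ) = n - 1 := rfl
  have mktop : ∀ {k : Fin n}, (k : ℕ) = n - 1 → k = top :=
    fun {k} h => Fin.ext (h.trans htopval.symm)
  have hatop : (a top : ℕ) = 0 := by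
    rw [ha, htopval, Nat.sub_add_cancel hn1, Nat.mod_self]
  have hamid : ∀ i : Fin n, (i : ℕ) < n - 1 → (a i : ℕ) = (i : ℕ) + 1 := by
    intro i hi; rw [ha]; exact Nat.mod_eq_of_lt (by omega)
  have hvaltop : ∀ i : Fin n, (i : ℕ) ≠ n - 1 → (i : ℕ) < n - 1 := by
    intro i hi; have := i.isLt; omega
  by_cases hβ : τ top = x top
  · left
    have step1 : ∀ i : Fin n, (x i : ℕ) < (i : ℕ) → τ i = x i := by
      intro i hdesc
      by_contra hne
      have hτi : τ i = a i := (hsel i).resolve_left hne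
      have hi_ne : (i : ℕ) ≠ n - 1 := by
        intro h
        exact hne (by rw [mktop h, hβ])
      set c := (x i : ℕ) with hc
      have hcn : c < n - 1 := by have := hvaltop i hi_ne; omega
      obtain ⟨j, hj1, hj2⟩ := exists_down τ hτ c hcn
      have hjx : τ j = x j := by
        rcases hsel j with h | h
        · exact h
        · by_cases hjtop : (j : ℕ) = n - 1
          · rw [mktop hjtop, hβ]
          · exfalso
            have hja := hamid j (hvaltop j hjtop)
            rw [h, hja] at hj1
            omega
      have hij : i = j := down_unique hx (le_refl c) hdesc
        (by rw [← hjx]; exact hj1) hj2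
      exact hne (hij ▸ hjx)
    have step2 : ∀ i : Fin n, (i : ℕ) < (x i : ℕ) → τ i = x i := by
      by_contra hcon
      push_neg at hcon
      set V := univ.filter (fun i : Fin n => (i : ℕ) < (x i : ℕ) ∧ τ i ≠ x i) with hV
      have hVne : V.Nonempty := by
        obtain ⟨i, hi1, hi2⟩ := hcon
        exact ⟨i, by simp only [hV, mem_filter, mem_univ, true_and]; exact ⟨hi1, hi2⟩⟩
      obtain ⟨i, hiV, hmin⟩ := V.exists_min_image (fun i => (i : ℕ)) hVne
      simp only [hV, mem_filter, mem_univ, true_and] at hiV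
      obtain ⟨hlt, hne⟩ := hiV
      have hτi : τ i = a i := (hsel i).resolve_left hne
      have hi_ne : (i : ℕ) ≠ n - 1 := by
        have := (x i).isLt; omega
      have hτival : (τ i : ℕ) = (i : ℕ) + 1 := by
        rw [hτi]; exact hamid i (hvaltop i hi_ne)
      set j := (x⁻¹) (τ i) with hj
      have hxj : x j = τ i := x.apply_symm_apply _
      have hji : j ≠ i := by
        intro h
        rw [h] at hxj
        exact hne hxj.symm
      have hτj : τ j ≠ x j := by
        intro h
        have h2 : τ j = τ i := by rw [h, hxj]
        exact hji (τ.injective h2)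
      have hxjval : (x j : ℕ) = (i : ℕ) + 1 := by rw [hxj, hτival]
      rcases lt_trichotomy ((x j : ℕ)) ((j : ℕ)) with h | h | h
      · exact hτj (step1 j h)
      · exact tour_ne_self hn x hx.1 j (Fin.ext h)
      · have hjV : j ∈ V := by
          simp only [hV, mem_filter, mem_univ, true_and]; exact ⟨h, hτj⟩
        have hle := hmin j hjV
        have hjival : (j : ℕ) ≠ (i : ℕ) := fun hh => hji (Fin.ext hh)
        omega
    apply Equiv.ext
    intro i
    rcases lt_trichotomy ((x i : ℕ)) ((i : ℕ)) with h | h | h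
    · exact step1 i h
    · exact absurd (Fin.ext h.symm : i = x i).symm (tour_ne_self hn x hx.1 i)
    · exact step2 i h
  · right
    have hτtop : τ top = a top := (hsel top).resolve_left hβ
    have hτtopval : (τ top : ℕ) = 0 := by rw [hτtop]; exact hatop
    have hxtop : (x top : ℕ) ≠ 0 := by
      intro h
      apply hβ
      rw [hτtop]
      exact Fin.ext (by rw [hatop, h])
    have stepA : ∀ d : Fin n, (x d : ℕ) < (d : ℕ) → τ d ≠ x d := by
      intro d hd hτd
      have hd_ne : (d : ℕ) ≠ n - 1 := by
        intro h
        exact hβ ((mktop h) ▸ hτd)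
      have hdlt : (d : ℕ) < n - 1 := hvaltop d hd_ne
      set B : Set (Fin n) := {i : Fin n | (x d : ℕ) ≤ (i : ℕ) ∧ (i : ℕ) ≤ (d : ℕ)} with hB
      have hinv : ∀ i ∈ B, τ i ∈ B := by
        intro i hiB
        obtain ⟨h1, h2⟩ := hiB
        by_cases hid : i = d
        · rw [hid, hτd]
          exact ⟨le_rfl, le_of_lt hd⟩
        · have hi2 : (i : ℕ) < (d : ℕ) :=
            lt_of_le_of_ne h2 (fun hh => hid (Fin.ext hh))
          set c := (i : ℕ) with hc
          have hcn : c < n - 1 := by omega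
          have htopd : top ≠ d := by
            intro hh
            rw [← hh, htopval] at hdlt
            omega
          have hDset : (univ.filter fun k : Fin n => (τ k : ℕ) ≤ c ∧ c < (k : ℕ))
              = {top, d} := by
            ext k
            simp only [mem_filter, mem_univ, true_and, mem_insert, mem_singleton]
            constructor
            · rintro ⟨hk1, hk2⟩
              rcases hsel k with h | h
              · right
                exact down_unique hx (by rw [← h]; exact hk1) hk2 h1 hi2
              · by_cases hktop : (k : ℕ) = n - 1
                · left; exact mktop hktop
                · exfalso
                  have hak := hamid k (hvaltop k hktop)
                  rw [h, hak] at hk1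
                  omega
            · rintro (rfl | rfl)
              · exact ⟨by rw [hτtopval]; omega, by rw [htopval]; omega⟩
              · exact ⟨by rw [hτd]; exact h1, hi2⟩
          have hDcard : (univ.filter fun k : Fin n => (τ k : ℕ) ≤ c ∧ c < (k : ℕ)).card
              = 2 := by
            rw [hDset, Finset.card_insert_of_notMem (by simp [htopd]),
              Finset.card_singleton]
          have hUcard := cross_card τ c
          rw [hDcard] at hUcard
          obtain ⟨ux, hux1, hux2⟩ := exists_up x hx.1 c hcn
          have hUsub : (univ.filter fun k : Fin n => (k : ℕ) ≤ c ∧ c < (τ k : ℕ))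
              ⊆ {i, ux} := by
            intro k hk
            simp only [mem_filter, mem_univ, true_and] at hk
            obtain ⟨hk1, hk2⟩ := hk
            simp only [mem_insert, mem_singleton]
            rcases hsel k with h | h
            · right
              exact up_unique hx hcn hk1 (by rw [← h]; exact hk2) hux1 hux2
            · left
              by_cases hktop : (k : ℕ) = n - 1
              · exfalso; omega
              · have hak := hamid k (hvaltop k hktop)
                rw [h, hak] at hk2
                exact Fin.ext (by omega)
          have hUeq : (univ.filter fun k : Fin n => (k : ℕ) ≤ c ∧ c < (τ k : ℕ))
              = {i, ux} := by
            apply Finset.eq_of_subset_of_card_le hUsub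
            rw [hUcard]
            exact Finset.card_insert_le i {ux} |>.trans (by simp)
          have hiU : i ∈ (univ.filter fun k : Fin n => (k : ℕ) ≤ c ∧ c < (τ k : ℕ)) := by
            rw [hUeq]; exact Finset.mem_insert_self i {ux}
          simp only [mem_filter, mem_univ, true_and] at hiU
          obtain ⟨hle1, hiup⟩ := hiU
          rcases hsel i with h | h
          · exfalso
            have hiux : i = ux := up_unique hx hcn le_rfl
              (by rw [← h]; exact hiup) hux1 hux2
            rw [← hiux] at hUeq
            rw [hUeq] at hUcard
            simp at hUcard
          · have hitop : (i : ℕ) ≠ n - 1 := by omega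
            have hτic : (τ i : ℕ) = c + 1 := by
              rw [h]; exact hamid i (hvaltop i hitop)
            exact ⟨by omega, by omega⟩
      exact not_tour_invariant τ B hinv (i := d)
        ⟨le_of_lt hd, le_rfl⟩ (j := top)
        (fun hh => absurd hh.2 (by rw [htopval]; omega)) hτ
    have stepB : ∀ i : Fin n, τ i = x i → (x i : ℕ) = ((i : ℕ) + 1) % n := by
      by_contra hcon
      push_neg at hcon
      set W := univ.filter (fun i : Fin n => τ i = x i ∧ (x i : ℕ) ≠ ((i : ℕ) + 1) % n)
        with hW
      have hWne : W.Nonempty := by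
        obtain ⟨i, hi1, hi2⟩ := hcon
        exact ⟨i, by simp only [hW, mem_filter, mem_univ, true_and]; exact ⟨hi1, hi2⟩⟩
      obtain ⟨i, hiW, hmax⟩ := W.exists_max_image (fun i => (i : ℕ)) hWne
      simp only [hW, mem_filter, mem_univ, true_and] at hiW
      obtain ⟨hτi, hne2⟩ := hiW
      have hi_ne : (i : ℕ) ≠ n - 1 := by
        intro h
        exact hβ ((mktop h) ▸ hτi)
      have hilt := hvaltop i hi_ne
      rcases lt_trichotomy ((x i : ℕ)) ((i : ℕ)) with h | h | h
      · exact stepA i h hτi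
      · exact tour_ne_self hn x hx.1 i (Fin.ext h)
      · have hxi1 : 1 ≤ (x i : ℕ) := by omega
        have hxilt : (x i : ℕ) < n := (x i).isLt
        set j : Fin n := ⟨(x i : ℕ) - 1, by omega⟩ with hj
        have hjval : (j : ℕ) = (x i : ℕ) - 1 := rfl
        have hji : (j : ℕ) ≠ (i : ℕ) := by
          intro hh
          apply hne2
          rw [Nat.mod_eq_of_lt (by omega)]
          omega
        have hjgt : (i : ℕ) < (j : ℕ) := by omega
        have haj : (a j : ℕ) = (x i : ℕ) := by
          rw [ha, hjval, Nat.sub_add_cancel hxi1]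
          exact Nat.mod_eq_of_lt hxilt
        have hτj : τ j = x j := by
          rcases hsel j with h' | h'
          · exact h'
          · exfalso
            have heq : τ j = τ i := by
              apply Fin.ext
              rw [h', hτi, haj]
            exact hji (congrArg Fin.val (τ.injective heq))
        have hjW : j ∈ W := by
          simp only [hW, mem_filter, mem_univ, true_and]
          refine ⟨hτj, ?_⟩
          have hjlt : (j : ℕ) < n - 1 := by omega
          rw [Nat.mod_eq_of_lt (by omega)]
          intro hh
          have hxx : x j = x i := Fin.ext (by omega)
          exact hji (congrArg Fin.val (x.injective hxx))
        have := hmax j hjW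
        omega
    apply Equiv.ext
    intro i
    rcases hsel i with h | h
    · have hv := stepB i h
      rw [h]
      exact Fin.ext (by rw [hv, ← ha i])
    · exact h


lemma inv_tour {σ : Equiv.Perm (Fin n)} (hσ : IsTour σ) : IsTour σ⁻¹ := by
  intro i j
  obtain ⟨k, hk⟩ := hσ j i
  refine ⟨k, ?_⟩
  rw [inv_pow, ← hk]
  exact Equiv.symm_apply_apply _ _

lemma inv_pyr {x : Equiv.Perm (Fin n)} (hx : IsPyramidal x) : IsPyramidal x⁻¹ := by
  refine ⟨inv_tour hx.1, fun i => ?_⟩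
  rw [← hx.2 i]
  unfold IsPeak
  rw [inv_inv]
  exact and_comm

lemma a_pow {a : Equiv.Perm (Fin n)} (ha : ∀ i : Fin n, (a i : ℕ) = ((i : ℕ) + 1) % n) :
    ∀ (k : ℕ) (i : Fin n), ((a ^ k) i : ℕ) = ((i : ℕ) + k) % n := by
  intro k
  induction k with
  | zero =>
      intro i
      simp only [pow_zero, Equiv.Perm.coe_one, id_eq, Nat.add_zero]
      exact (Nat.mod_eq_of_lt i.isLt).symm
  | succ k ih =>
      intro i
      have h3 : (a ^ (k + 1)) i = a ((a ^ k) i) := by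
        rw [pow_succ', Equiv.Perm.mul_apply]
      rw [h3, ha, ih, Nat.mod_add_mod]
      ring_nf

lemma a_tour {a : Equiv.Perm (Fin n)} (hn : 1 ≤ n)
    (ha : ∀ i : Fin n, (a i : ℕ) = ((i : ℕ) + 1) % n) : IsTour a := by
  intro i j
  refine ⟨n + (j : ℕ) - (i : ℕ), ?_⟩
  apply Fin.ext
  rw [a_pow ha]
  have hi := i.isLt
  have hj := j.isLt
  have : (i : ℕ) + (n + (j : ℕ) - (i : ℕ)) = n + (j : ℕ) := by omega
  rw [this, Nat.add_comm, Nat.add_mod_right]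
  exact Nat.mod_eq_of_lt j.isLt

lemma a_pyr {a : Equiv.Perm (Fin n)} (hn : 2 ≤ n)
    (ha : ∀ i : Fin n, (a i : ℕ) = ((i : ℕ) + 1) % n) : IsPyramidal a := by
  have hn1 : 1 ≤ n := by omega
  refine ⟨a_tour hn1 ha, fun i => ?_⟩
  constructor
  · rintro ⟨h1, h2⟩
    rw [Fin.lt_def] at h2
    by_contra hne
    have := i.isLt
    rw [ha] at h2
    rw [Nat.mod_eq_of_lt (by omega)] at h2
    omega
  · intro h
    have hai : (a i : ℕ) = 0 := by
      rw [ha, h, Nat.sub_add_cancel hn1, Nat.mod_self]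
    constructor
    · rw [Fin.lt_def]
      set j := a⁻¹ i with hj
      have hji : a j = i := a.apply_symm_apply i
      have hjlt := j.isLt
      rcases Nat.lt_or_ge ((j : ℕ)) (n - 1) with hlt | hge
      · have := ha j
        rw [Nat.mod_eq_of_lt (by omega)] at this
        rw [hji] at this
        omega
      · exfalso
        have hjv : (j : ℕ) = n - 1 := by omega
        have : (a j : ℕ) = 0 := by
          rw [ha, hjv, Nat.sub_add_cancel hn1, Nat.mod_self]
        rw [hji] at this
        omega
    · rw [Fin.lt_def, hai, h]
      omega

lemma psb_of_pyr {x : Equiv.Perm (Fin n)} (hx : IsPyramidal x) : IsPSB x := by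
  refine ⟨hx.1, fun i => ?_⟩
  constructor
  · rintro ⟨hp, _⟩
    exact (hx.2 i).1 hp
  · intro h
    refine ⟨(hx.2 i).2 h, ?_⟩
    rintro (⟨_, _, h3⟩ | ⟨h3, _, _⟩)
    · rw [Fin.lt_def] at h3
      have := (x (x i)).isLt
      omega
    · rw [Fin.lt_def] at h3
      have := ((x⁻¹) ((x⁻¹) i)).isLt
      omega

lemma chv_inj {σ σ' : Equiv.Perm (Fin n)} (h : chv σ = chv σ') : σ = σ' := by
  apply Equiv.ext
  intro i
  by_contra hne
  have h1 : chv σ (i, σ i) = 1 := by simp [chv]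
  have h2 : chv σ' (i, σ i) = 0 := by
    simp only [chv]
    rw [if_neg (fun hh => hne hh.symm)]
  rw [h] at h1
  rw [h1] at h2
  norm_num at h2


lemma ext_lemma (S : Set (Fin n × Fin n → ℝ)) (u w : Fin n × Fin n → ℝ)
    (hu : u ∈ S) (hw : w ∈ S)
    (hnn : ∀ v ∈ S, ∀ e, 0 ≤ v e)
    (hz : ∀ v ∈ S, (∀ e, u e = 0 → w e = 0 → v e = 0) → v = u ∨ v = w) :
    IsExtreme ℝ (convexHull ℝ S) (segment ℝ u w) := by
  classical
  have hnn' : ∀ y ∈ convexHull ℝ S, ∀ e, 0 ≤ y e := by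
    intro y hy e
    rw [_root_.convexHull_eq] at hy
    obtain ⟨ι, t, wt, z, hw0, hw1, hzS, rfl⟩ := hy
    rw [Finset.centerMass_eq_of_sum_1 _ _ hw1, Finset.sum_apply]
    refine Finset.sum_nonneg fun i hi => ?_
    have : (wt i • z i) e = wt i * z i e := rfl
    rw [this]
    exact mul_nonneg (hw0 i hi) (hnn _ (hzS i hi) e)
  have hmain : ∀ y ∈ convexHull ℝ S,
      (∀ e, u e = 0 → w e = 0 → y e = 0) → y ∈ segment ℝ u w := by
    intro y hy hsupp
    rw [_root_.convexHull_eq] at hy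
    obtain ⟨ι, t, wt, z, hw0, hw1, hzS, rfl⟩ := hy
    rw [← convexHull_pair]
    have hy_eq : t.centerMass wt z = ∑ i ∈ t, wt i • z i :=
      Finset.centerMass_eq_of_sum_1 _ _ hw1
    have hmem : ∀ i ∈ t, wt i ≠ 0 → z i = u ∨ z i = w := by
      intro i hi hwi
      refine hz _ (hzS i hi) ?_
      intro e hue hwe
      have h0 : (∑ i ∈ t, wt i • z i) e = 0 := by
        rw [← hy_eq]; exact hsupp e hue hwe
      rw [Finset.sum_apply] at h0
      have hterm := (Finset.sum_eq_zero_iff_of_nonneg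
        (fun i hi => by
          have : (wt i • z i) e = wt i * z i e := rfl
          rw [this]
          exact mul_nonneg (hw0 i hi) (hnn _ (hzS i hi) e))).1 h0 i hi
      have hterm' : wt i * z i e = 0 := hterm
      rcases mul_eq_zero.1 hterm' with h | h
      · exact absurd h hwi
      · exact h
    rw [← Finset.centerMass_filter_ne_zero (w := wt)]
    apply Finset.centerMass_mem_convexHull
    · intro i hi
      exact hw0 i (Finset.mem_of_mem_filter i hi)
    · rw [Finset.sum_filter_ne_zero, hw1]
      norm_num
    · intro i hi
      rw [Finset.mem_filter] at hi
      rcases hmem i hi.1 hi.2 with h | h <;> simp [h]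
  constructor
  · rw [← convexHull_pair]
    exact convexHull_mono (by
      intro p hp
      rcases hp with rfl | hp
      · exact hu
      · rw [Set.mem_singleton_iff] at hp
        exact hp ▸ hw)
  · intro x1 hx1 x2 hx2 zz hzz hzopen
    obtain ⟨t1, t2, ht1, ht2, hsum, hzz_eq⟩ := hzopen
    have hzsupp : ∀ e, u e = 0 → w e = 0 → zz e = 0 := by
      obtain ⟨s1, s2, hs1, hs2, hs, rfl⟩ := hzz
      intro e hue hwe
      have : (s1 • u + s2 • w) e = s1 * u e + s2 * w e := rfl
      rw [this, hue, hwe]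
      ring
    have h1 : ∀ e, u e = 0 → w e = 0 → x1 e = 0 ∧ x2 e = 0 := by
      intro e hue hwe
      have h0 : zz e = 0 := hzsupp e hue hwe
      rw [← hzz_eq] at h0
      have heval : (t1 • x1 + t2 • x2) e = t1 * x1 e + t2 * x2 e := rfl
      rw [heval] at h0
      have n1 := hnn' x1 hx1 e
      have n2 := hnn' x2 hx2 e
      constructor <;> nlinarith
    exact hmain x1 hx1 (fun e he1 he2 => (h1 e he1 he2).1)

end Aux

/-- Every pyramidal tour gives a vertex of `PSB(n)` adjacent to the vertex of the
all-ascending tour `⟨1,2,…,n⟩` and to the vertex of the all-descending tour. -/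
theorem stmt7 (n : ℕ) (hn : 4 ≤ n) (a : Equiv.Perm (Fin n))
    (ha : ∀ i : Fin n, (a i : ℕ) = ((i : ℕ) + 1) % n)
    (x : Equiv.Perm (Fin n)) (hx : IsPyramidal x) :
    (x = a ∨ AdjacentIn (PSBvertices n) (chv x) (chv a)) ∧
    (x = a⁻¹ ∨ AdjacentIn (PSBvertices n) (chv x) (chv a⁻¹)) := by
  have hn2 : 2 ≤ n := by omega
  have hapyr : IsPyramidal a := a_pyr hn2 ha
  have hxpsb : IsPSB x := psb_of_pyr hx
  have hapsb : IsPSB a := psb_of_pyr hapyr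
  have hainvpsb : IsPSB a⁻¹ := psb_of_pyr (inv_pyr hapyr)
  have hmemx : chv x ∈ PSBvertices n := ⟨x, hxpsb, rfl⟩
  have hmema : chv a ∈ PSBvertices n := ⟨a, hapsb, rfl⟩
  have hmemainv : chv a⁻¹ ∈ PSBvertices n := ⟨a⁻¹, hainvpsb, rfl⟩
  have hnn : ∀ v ∈ PSBvertices n, ∀ e, 0 ≤ v e := by
    rintro v ⟨σ, hσ, rfl⟩ e
    unfold chv
    positivity
  have hselgen : ∀ (σ y : Equiv.Perm (Fin n)),
      (∀ e, chv x e = 0 → chv y e = 0 → chv σ e = 0) →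
      ∀ i, σ i = x i ∨ σ i = y i := by
    intro σ y hsupp i
    by_contra hcon
    push_neg at hcon
    have h1 : chv x (i, σ i) = 0 := by
      unfold chv
      exact if_neg (fun hh => hcon.1 hh.symm)
    have h2 : chv y (i, σ i) = 0 := by
      unfold chv
      exact if_neg (fun hh => hcon.2 hh.symm)
    have h3 := hsupp (i, σ i) h1 h2
    unfold chv at h3
    rw [if_pos rfl] at h3
    norm_num at h3
  constructor
  · by_cases hxa : x = a
    · exact Or.inl hxa
    · refine Or.inr ⟨fun h => hxa (chv_inj h), ?_⟩
      apply ext_lemma _ _ _ hmemx hmema hnn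
      rintro v ⟨σ, hσ, rfl⟩ hsupp
      have hsel := hselgen σ a hsupp
      rcases keylemma hn2 hx hσ.1 ha hsel with h | h
      · exact Or.inl (by rw [h])
      · exact Or.inr (by rw [h])
  · by_cases hxa : x = a⁻¹
    · exact Or.inl hxa
    · refine Or.inr ⟨fun h => hxa (chv_inj h), ?_⟩
      apply ext_lemma _ _ _ hmemx hmemainv hnn
      rintro v ⟨σ, hσ, rfl⟩ hsupp
      have hsel := hselgen σ a⁻¹ hsupp
      have hsel' : ∀ j, σ⁻¹ j = x⁻¹ j ∨ σ⁻¹ j = a j := by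
        intro j
        rcases hsel (σ⁻¹ j) with h | h
        · left
          apply x.injective
          rw [show x (x⁻¹ j) = j from x.apply_symm_apply j, ← h]
          exact σ.apply_symm_apply j
        · right
          apply a⁻¹.injective
          show a⁻¹ (σ⁻¹ j) = a⁻¹ (a j)
          rw [show a⁻¹ (a j) = j from a.symm_apply_apply j, ← h]
          exact σ.apply_symm_apply j
      rcases keylemma hn2 (inv_pyr hx) (inv_tour hσ.1) ha hsel' with h | h
      · have hh : σ = x := inv_injective h
        exact Or.inl (by rw [hh])
      · have hh : σ = a⁻¹ := by rw [← h, inv_inv]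
        exact Or.inr (by rw [hh])
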